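/- Let E be a finite-dimensional real vector space and C a cone of E. Then the set {φ ∈ E' : φ(x) > 0 for every x ∈ C with x ≠ 0} is an open subset of the dual space E'. -/
import Mathlib


/-- A *cone* in a real topological vector space: a closed subset containing `0`,
stable under addition and under multiplication by positive scalars. -/
def IsCone {E : Type*} [NormedAddCommGroup E] [NormedSpace ℝ E] (C : Set E) : Prop :=
  IsClosed C ∧ (0 : E) ∈ C ∧ (∀ x ∈ C, ∀ y ∈ C, x + y ∈ C) ∧
    ∀ t : ℝ, 0 < t → ∀ x ∈ C, t • x ∈ C

/-- For a cone `C` of a finite-dimensional real vector space `E`, the set of linear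
forms that are positive on every nonzero vector of `C` is open in the dual space. -/
theorem positive_forms_open {E : Type*} [NormedAddCommGroup E] [NormedSpace ℝ E]
    [FiniteDimensional ℝ E] (C : Set E) (hC : IsCone C) :
    IsOpen {φ : E →L[ℝ] ℝ | ∀ x ∈ C, x ≠ 0 → 0 < φ x} := by
  set K : Set E := C ∩ Metric.sphere 0 1 with hKdef
  have hKc : IsCompact K := by
    have hcl : IsClosed K := hC.1.inter Metric.isClosed_sphere
    have hb : Bornology.IsBounded K :=
      (Metric.isBounded_sphere).subset Set.inter_subset_right
    exact Metric.isCompact_of_isClosed_isBounded hcl hb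
  have hset : {φ : E →L[ℝ] ℝ | ∀ x ∈ C, x ≠ 0 → 0 < φ x}
      = {φ : E →L[ℝ] ℝ | ∀ x ∈ K, 0 < φ x} := by
    ext φ
    simp only [Set.mem_setOf_eq]
    constructor
    · intro h x hx
      refine h x hx.1 ?_
      intro h0
      have := hx.2
      simp [h0, mem_sphere_zero_iff_norm] at this
    · intro h x hxC hx0
      have hn : (0:ℝ) < ‖x‖ := norm_pos_iff.mpr hx0
      have hmem : (‖x‖⁻¹ : ℝ) • x ∈ K := by
        constructor
        · exact hC.2.2.2 _ (inv_pos.mpr hn) x hxC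
        · rw [mem_sphere_zero_iff_norm, norm_smul, norm_inv, norm_norm]
          field_simp
      have := h _ hmem
      rw [map_smul] at this
      have := (mul_pos_iff.mp this)
      rcases this with ⟨_, h2⟩ | ⟨h1, _⟩
      · exact h2
      · exact absurd h1 (inv_pos.mpr hn).not_gt
  rw [hset]
  rw [Metric.isOpen_iff]
  intro φ hφ
  rcases K.eq_empty_or_nonempty with hK | hK
  · exact ⟨1, one_pos, by intro ψ _; simp [Set.mem_setOf_eq, hK]⟩
  · obtain ⟨x₀, hx₀, hmin⟩ := hKc.exists_isMinOn hK φ.continuous.continuousOn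
    have hm : 0 < φ x₀ := hφ x₀ hx₀
    refine ⟨φ x₀, hm, ?_⟩
    intro ψ hψ y hy
    have hy1 : ‖y‖ = 1 := mem_sphere_zero_iff_norm.mp hy.2
    have hdiff : ‖ψ y - φ y‖ ≤ ‖ψ - φ‖ * ‖y‖ := by
      have := (ψ - φ).le_opNorm y
      simpa using this
    rw [hy1, mul_one] at hdiff
    have hd : ‖ψ - φ‖ < φ x₀ := by
      rw [Metric.mem_ball, dist_eq_norm] at hψ
      exact hψ
    have hφy : φ x₀ ≤ φ y := hmin hy
    have : |ψ y - φ y| < φ x₀ := lt_of_le_of_lt hdiff hd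
    have := abs_lt.mp this
    linarith [this.1]
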